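/- There exists ε > 0, depending only on the operator norms ‖T‖ and ‖S‖, such that for every r ∈ ℝ with |r| < ε the operator Q(r) is invertible (it is a continuous linear equivalence of H), and the operator A^r := (r·(T ∘ Dsi(r)) + S ∘ Dco(r)) ∘ Q(r)⁻¹ is a compact self-adjoint operator that commutes with both T and S. -/

import Mathlib

set_option linter.unusedSectionVars false
set_option synthInstance.maxHeartbeats 1000000
set_option maxHeartbeats 1000000


variable {H : Type*} [NormedAddCommGroup H] [InnerProductSpace ℝ H] [CompleteSpace H]

/-- `Dco T s = ∑_{k=0}^∞ ((-1)^k s^{2k} / (2k)!) • T^k`. -/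
noncomputable def Dco (T : H →L[ℝ] H) (s : ℝ) : H →L[ℝ] H :=
  ∑' k : ℕ, ((-1 : ℝ) ^ k * s ^ (2 * k) / (Nat.factorial (2 * k) : ℝ)) • T ^ k

/-- `Dsi T s = ∑_{k=0}^∞ ((-1)^k s^{2k} / (2k+1)!) • T^k`. -/
noncomputable def Dsi (T : H →L[ℝ] H) (s : ℝ) : H →L[ℝ] H :=
  ∑' k : ℕ, ((-1 : ℝ) ^ k * s ^ (2 * k) / (Nat.factorial (2 * k + 1) : ℝ)) • T ^ k

/-- The focal-point operator `Q(s) = Dco(s) - s • (Dsi(s) ∘ S)`. -/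
noncomputable def Qop (T S : H →L[ℝ] H) (s : ℝ) : H →L[ℝ] H :=
  Dco T s - s • (Dsi T s ∘L S)

/-- The scalar Jacobi solution
`c_{λ,μ}(s) = ∑ (-1)^k s^{2k} λ^k/(2k)! - s·μ·∑ (-1)^k s^{2k} λ^k/(2k+1)!`. -/
noncomputable def cJacobi (lam mu : ℝ) (s : ℝ) : ℝ :=
  (∑' k : ℕ, (-1 : ℝ) ^ k * s ^ (2 * k) * lam ^ k / (Nat.factorial (2 * k) : ℝ)) -
    s * mu * ∑' k : ℕ, (-1 : ℝ) ^ k * s ^ (2 * k) * lam ^ k / (Nat.factorial (2 * k + 1) : ℝ)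

/-- The shape operator of the parallel submanifold at distance `r`:
`A^r = (r • (T ∘ Dsi(r)) + S ∘ Dco(r)) ∘ Q(r)⁻¹` (via `Ring.inverse`). -/
noncomputable def Ar (T S : H →L[ℝ] H) (r : ℝ) : H →L[ℝ] H :=
  (r • (T ∘L Dsi T r) + S ∘L Dco T r) ∘L Ring.inverse (Qop T S r)

private lemma norm_pow_le_aux (T : H →L[ℝ] H) (k : ℕ) : ‖T ^ k‖ ≤ ‖T‖ ^ k := by
  induction k with
  | zero => rw [pow_zero, pow_zero]; exact ContinuousLinearMap.norm_id_le
  | succ n ih =>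
    calc ‖T ^ (n + 1)‖ = ‖T ^ n * T‖ := by rw [pow_succ]
      _ ≤ ‖T ^ n‖ * ‖T‖ := norm_mul_le _ _
      _ ≤ ‖T‖ ^ n * ‖T‖ := by gcongr
      _ = ‖T‖ ^ (n + 1) := (pow_succ _ _).symm

private lemma term_norm_le (T : H →L[ℝ] H) (s : ℝ) {k n : ℕ} (hn : k ≤ n) :
    ‖((-1 : ℝ) ^ k * s ^ (2 * k) / (Nat.factorial n : ℝ)) • T ^ k‖ ≤
      (s ^ 2 * ‖T‖) ^ k / (Nat.factorial k : ℝ) := by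
  have h1 : ‖(-1 : ℝ) ^ k * s ^ (2 * k) / (Nat.factorial n : ℝ)‖ =
      (s ^ 2) ^ k / (Nat.factorial n : ℝ) := by
    rw [Real.norm_eq_abs, abs_div, abs_mul, abs_pow (-1 : ℝ), abs_neg, abs_one, one_pow, one_mul,
      pow_mul, abs_of_nonneg (pow_nonneg (sq_nonneg s) k), Nat.abs_cast]
  have h2 : (s ^ 2) ^ k / (Nat.factorial n : ℝ) * ‖T ^ k‖ ≤
      (s ^ 2) ^ k / (Nat.factorial k : ℝ) * ‖T‖ ^ k := by
    have hkk : (Nat.factorial k : ℝ) ≤ (Nat.factorial n : ℝ) :=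
      Nat.cast_le.mpr (Nat.factorial_le hn)
    have h3 := norm_pow_le_aux T k
    have h4 : (0 : ℝ) < (Nat.factorial k : ℝ) := Nat.cast_pos.mpr (Nat.factorial_pos k)
    gcongr
  calc ‖((-1 : ℝ) ^ k * s ^ (2 * k) / (Nat.factorial n : ℝ)) • T ^ k‖
      ≤ (s ^ 2) ^ k / (Nat.factorial n : ℝ) * ‖T ^ k‖ := by
        rw [← h1]
        exact norm_smul_le ((-1 : ℝ) ^ k * s ^ (2 * k) / (Nat.factorial n : ℝ)) (T ^ k)
    _ ≤ (s ^ 2) ^ k / (Nat.factorial k : ℝ) * ‖T‖ ^ k := h2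
    _ = (s ^ 2 * ‖T‖) ^ k / (Nat.factorial k : ℝ) := by rw [mul_pow]; ring

private lemma summable_norm_co (T : H →L[ℝ] H) (s : ℝ) :
    Summable (fun k : ℕ =>
      ‖((-1 : ℝ) ^ k * s ^ (2 * k) / (Nat.factorial (2 * k) : ℝ)) • T ^ k‖) :=
  Summable.of_nonneg_of_le (fun _ => norm_nonneg _)
    (fun k => term_norm_le T s (by omega))
    (Real.summable_pow_div_factorial (s ^ 2 * ‖T‖))

private lemma summable_norm_si (T : H →L[ℝ] H) (s : ℝ) :
    Summable (fun k : ℕ =>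
      ‖((-1 : ℝ) ^ k * s ^ (2 * k) / (Nat.factorial (2 * k + 1) : ℝ)) • T ^ k‖) :=
  Summable.of_nonneg_of_le (fun _ => norm_nonneg _)
    (fun k => term_norm_le T s (by omega))
    (Real.summable_pow_div_factorial (s ^ 2 * ‖T‖))

private lemma summable_co (T : H →L[ℝ] H) (s : ℝ) :
    Summable (fun k : ℕ =>
      ((-1 : ℝ) ^ k * s ^ (2 * k) / (Nat.factorial (2 * k) : ℝ)) • T ^ k) :=
  (summable_norm_co T s).of_norm

private lemma summable_si (T : H →L[ℝ] H) (s : ℝ) :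
    Summable (fun k : ℕ =>
      ((-1 : ℝ) ^ k * s ^ (2 * k) / (Nat.factorial (2 * k + 1) : ℝ)) • T ^ k) :=
  (summable_norm_si T s).of_norm

private lemma commute_series {B T : H →L[ℝ] H} (hB : Commute B T) (c : ℕ → ℝ)
    (hsum : Summable fun k : ℕ => c k • T ^ k) :
    Commute B (∑' k : ℕ, c k • T ^ k) := by
  have h1 : ∑' k : ℕ, B * (c k • T ^ k) = B * ∑' k : ℕ, c k • T ^ k :=
    Summable.tsum_mul_left B hsum
  have h2 : ∑' k : ℕ, (c k • T ^ k) * B = (∑' k : ℕ, c k • T ^ k) * B :=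
    Summable.tsum_mul_right B hsum
  show B * _ = _ * B
  rw [← h1, ← h2]
  exact tsum_congr fun k => by rw [mul_smul_comm, smul_mul_assoc, (hB.pow_right k).eq]

private lemma commute_Dco {B T : H →L[ℝ] H} (hB : Commute B T) (s : ℝ) :
    Commute B (Dco T s) :=
  commute_series hB _ (summable_co T s)

private lemma commute_Dsi {B T : H →L[ℝ] H} (hB : Commute B T) (s : ℝ) :
    Commute B (Dsi T s) :=
  commute_series hB _ (summable_si T s)

private lemma isSelfAdjoint_series {T : H →L[ℝ] H} (hT : IsSelfAdjoint T) (c : ℕ → ℝ) :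
    IsSelfAdjoint (∑' k : ℕ, c k • T ^ k) := by
  show star _ = _
  rw [tsum_star]
  exact tsum_congr fun k => by rw [star_smul, star_trivial, star_pow, hT.star_eq]

private lemma isSelfAdjoint_Dco {T : H →L[ℝ] H} (hT : IsSelfAdjoint T) (s : ℝ) :
    IsSelfAdjoint (Dco T s) :=
  isSelfAdjoint_series hT _

private lemma isSelfAdjoint_Dsi {T : H →L[ℝ] H} (hT : IsSelfAdjoint T) (s : ℝ) :
    IsSelfAdjoint (Dsi T s) :=
  isSelfAdjoint_series hT _

private lemma exp_eq_tsum_aux (x : ℝ) :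
    Real.exp x = ∑' n : ℕ, x ^ n / (Nat.factorial n : ℝ) := by
  rw [Real.exp_eq_exp_ℝ, NormedSpace.exp_eq_tsum_div]

private lemma norm_Dsi_le (T : H →L[ℝ] H) (s : ℝ) :
    ‖Dsi T s‖ ≤ Real.exp (s ^ 2 * ‖T‖) := by
  calc ‖Dsi T s‖ ≤ ∑' k : ℕ,
        ‖((-1 : ℝ) ^ k * s ^ (2 * k) / (Nat.factorial (2 * k + 1) : ℝ)) • T ^ k‖ :=
      norm_tsum_le_tsum_norm (summable_norm_si T s)
    _ ≤ ∑' k : ℕ, (s ^ 2 * ‖T‖) ^ k / (Nat.factorial k : ℝ) :=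
      Summable.tsum_le_tsum (fun k => term_norm_le T s (by omega)) (summable_norm_si T s)
        (Real.summable_pow_div_factorial (s ^ 2 * ‖T‖))
    _ = Real.exp (s ^ 2 * ‖T‖) := (exp_eq_tsum_aux _).symm

private lemma norm_Dco_sub_one_le (T : H →L[ℝ] H) (s : ℝ) :
    ‖Dco T s - 1‖ ≤ s ^ 2 * ‖T‖ * Real.exp (s ^ 2 * ‖T‖) := by
  set x : ℝ := s ^ 2 * ‖T‖ with hxdef
  have hx0 : 0 ≤ x := by positivity
  have hkey : Dco T s - 1 = ∑' k : ℕ,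
      ((-1 : ℝ) ^ (k + 1) * s ^ (2 * (k + 1)) / (Nat.factorial (2 * (k + 1)) : ℝ)) • T ^ (k + 1) := by
    rw [Dco, Summable.tsum_eq_zero_add (summable_co T s)]
    norm_num
  have hnorm1 : Summable (fun k : ℕ =>
      ‖((-1 : ℝ) ^ (k + 1) * s ^ (2 * (k + 1)) / (Nat.factorial (2 * (k + 1)) : ℝ)) • T ^ (k + 1)‖) :=
    (summable_norm_co T s).comp_injective Nat.succ_injective
  have hsum2 : Summable (fun k : ℕ => x * (x ^ k / (Nat.factorial k : ℝ))) :=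
    (Real.summable_pow_div_factorial x).mul_left x
  have hb : ∀ k : ℕ, x ^ (k + 1) / (Nat.factorial (k + 1) : ℝ) ≤ x * (x ^ k / (Nat.factorial k : ℝ)) := by
    intro k
    rw [pow_succ', mul_div_assoc]
    gcongr
    exact Nat.le_succ k
  rw [hkey]
  calc ‖∑' k : ℕ,
        ((-1 : ℝ) ^ (k + 1) * s ^ (2 * (k + 1)) / (Nat.factorial (2 * (k + 1)) : ℝ)) • T ^ (k + 1)‖
      ≤ ∑' k : ℕ,
        ‖((-1 : ℝ) ^ (k + 1) * s ^ (2 * (k + 1)) / (Nat.factorial (2 * (k + 1)) : ℝ)) • T ^ (k + 1)‖ :=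
      norm_tsum_le_tsum_norm hnorm1
    _ ≤ ∑' k : ℕ, x * (x ^ k / (Nat.factorial k : ℝ)) := by
      refine Summable.tsum_le_tsum (fun k => ?_) hnorm1 hsum2
      exact (term_norm_le T s (by omega)).trans (hb k)
    _ = x * Real.exp x := by rw [tsum_mul_left, exp_eq_tsum_aux]
    _ = s ^ 2 * ‖T‖ * Real.exp (s ^ 2 * ‖T‖) := by rw [hxdef]

private lemma norm_Qop_sub_one_le (T S : H →L[ℝ] H) (s : ℝ) :
    ‖Qop T S s - 1‖ ≤
      s ^ 2 * ‖T‖ * Real.exp (s ^ 2 * ‖T‖) + |s| * ‖S‖ * Real.exp (s ^ 2 * ‖T‖) := by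
  have h1 : Qop T S s - 1 = (Dco T s - 1) - s • (Dsi T s ∘L S) := by
    rw [Qop]; abel
  rw [h1]
  refine (norm_sub_le _ _).trans ?_
  have h2 : ‖s • (Dsi T s ∘L S)‖ ≤ |s| * ‖S‖ * Real.exp (s ^ 2 * ‖T‖) := by
    calc ‖s • (Dsi T s ∘L S)‖ = |s| * ‖Dsi T s ∘L S‖ := by
          rw [norm_smul s (Dsi T s ∘L S), Real.norm_eq_abs]
      _ ≤ |s| * (‖Dsi T s‖ * ‖S‖) := by
          have := ContinuousLinearMap.opNorm_comp_le (Dsi T s) S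
          gcongr
      _ ≤ |s| * (Real.exp (s ^ 2 * ‖T‖) * ‖S‖) := by
          have := norm_Dsi_le T s
          gcongr
      _ = |s| * ‖S‖ * Real.exp (s ^ 2 * ‖T‖) := by ring
  have h3 := norm_Dco_sub_one_le T s
  linarith

private lemma commute_ringInverse_aux {R : Type*} [MonoidWithZero R] {a b : R}
    (h : Commute a b) (hb : IsUnit b) : Commute a (Ring.inverse b) := by
  obtain ⟨u, rfl⟩ := hb
  rw [Ring.inverse_unit]
  exact h.units_inv_right


/-- There exists `ε > 0`, depending only on `‖T‖` and `‖S‖`, such that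
for every `r` with `|r| < ε` the operator `Q(r)` is invertible and
`A^r = (r • (T ∘ Dsi(r)) + S ∘ Dco(r)) ∘ Q(r)⁻¹` is a compact self-adjoint operator
commuting with both `T` and `S`. -/
theorem parallel_shape_operator_exists :
    ∃ ε : ℝ → ℝ → ℝ, (∀ a b : ℝ, 0 < ε a b) ∧
      ∀ (H : Type*) [NormedAddCommGroup H] [InnerProductSpace ℝ H] [CompleteSpace H]
        (T S : H →L[ℝ] H), IsCompactOperator T → IsCompactOperator S →
        IsSelfAdjoint T → IsSelfAdjoint S → T ∘L S = S ∘L T →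
        ∀ r : ℝ, |r| < ε ‖T‖ ‖S‖ →
          IsUnit (Qop T S r) ∧
          IsCompactOperator (Ar T S r) ∧
          IsSelfAdjoint (Ar T S r) ∧
          Commute (Ar T S r) T ∧
          Commute (Ar T S r) S := by
  refine ⟨fun a b => 1 / (3 * (|a| + |b|) + 1), fun a b => by positivity, ?_⟩
  intro H _ _ _ T S hTc hSc hTsa hSsa hTS r hr
  simp only [abs_norm] at hr
  -- numerics
  have hd : (0 : ℝ) < 3 * (‖T‖ + ‖S‖) + 1 := by positivity
  have hr' : |r| * (3 * (‖T‖ + ‖S‖) + 1) < 1 := by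
    rw [lt_div_iff₀ hd] at hr
    exact hr
  have habs : (0 : ℝ) ≤ |r| := abs_nonneg r
  have ha : (0 : ℝ) ≤ ‖T‖ := norm_nonneg T
  have hb : (0 : ℝ) ≤ ‖S‖ := norm_nonneg S
  have hra : |r| ≤ 1 := by nlinarith
  have hsq : r ^ 2 ≤ |r| := by nlinarith [sq_abs r]
  have hx1 : r ^ 2 * ‖T‖ ≤ 1 := by nlinarith
  have hE3 : Real.exp (r ^ 2 * ‖T‖) ≤ 3 := by
    have h1 := Real.exp_le_exp.mpr hx1
    have h2 := Real.exp_one_lt_d9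
    linarith
  have hE0 : (0 : ℝ) < Real.exp (r ^ 2 * ‖T‖) := Real.exp_pos _
  have hQ1 : ‖Qop T S r - 1‖ < 1 := by
    refine lt_of_le_of_lt (norm_Qop_sub_one_le T S r) ?_
    have e1 : r ^ 2 * ‖T‖ * Real.exp (r ^ 2 * ‖T‖) ≤ |r| * ‖T‖ * 3 := by
      nlinarith [mul_nonneg (mul_nonneg habs ha) (sub_nonneg.mpr hE3),
        mul_nonneg (mul_nonneg (sub_nonneg.mpr hsq) ha) hE0.le]
    have e2 : |r| * ‖S‖ * Real.exp (r ^ 2 * ‖T‖) ≤ |r| * ‖S‖ * 3 := by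
      nlinarith [mul_nonneg habs hb]
    nlinarith
  -- invertibility
  have hQu : IsUnit (Qop T S r) := by
    have h : ‖1 - Qop T S r‖ < 1 := by rwa [norm_sub_rev]
    simpa using (Units.oneSub _ h).isUnit
  -- commutation structure
  have hTS' : Commute T S := hTS
  have hTDco : Commute T (Dco T r) := commute_Dco (Commute.refl T) r
  have hTDsi : Commute T (Dsi T r) := commute_Dsi (Commute.refl T) r
  have hSDco : Commute S (Dco T r) := commute_Dco hTS'.symm r
  have hSDsi : Commute S (Dsi T r) := commute_Dsi hTS'.symm r
  set P : H →L[ℝ] H := r • (T * Dsi T r) + S * Dco T r with hPdef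
  have hArP : Ar T S r = P * Ring.inverse (Qop T S r) := rfl
  have hQdef : Qop T S r = Dco T r - r • (Dsi T r * S) := rfl
  have hTQ : Commute T (Qop T S r) := by
    rw [hQdef]
    exact hTDco.sub_right ((hTDsi.mul_right hTS').smul_right r)
  have hSQ : Commute S (Qop T S r) := by
    rw [hQdef]
    exact hSDco.sub_right ((hSDsi.mul_right (Commute.refl S)).smul_right r)
  have hTP : Commute T P := by
    rw [hPdef]
    exact (((Commute.refl T).mul_right hTDsi).smul_right r).add_right (hTS'.mul_right hTDco)
  have hSP : Commute S P := by
    rw [hPdef]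
    exact ((hTS'.symm.mul_right hSDsi).smul_right r).add_right ((Commute.refl S).mul_right hSDco)
  have hPQ : Commute P (Qop T S r) := by
    rw [hQdef]
    exact (commute_Dco hTP.symm r).sub_right
      (((commute_Dsi hTP.symm r).mul_right hSP.symm).smul_right r)
  have hTiQ : Commute T (Ring.inverse (Qop T S r)) := commute_ringInverse_aux hTQ hQu
  have hSiQ : Commute S (Ring.inverse (Qop T S r)) := commute_ringInverse_aux hSQ hQu
  have hPiQ : Commute P (Ring.inverse (Qop T S r)) := commute_ringInverse_aux hPQ hQu
  -- self-adjointness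
  have hDcosa : IsSelfAdjoint (Dco T r) := isSelfAdjoint_Dco hTsa r
  have hDsisa : IsSelfAdjoint (Dsi T r) := isSelfAdjoint_Dsi hTsa r
  have hQsa : IsSelfAdjoint (Qop T S r) := by
    show star _ = _
    rw [hQdef, star_sub, star_smul, star_mul, hSsa.star_eq, hDsisa.star_eq,
      hDcosa.star_eq, star_trivial r, hSDsi.eq]
  have hiQsa : star (Ring.inverse (Qop T S r)) = Ring.inverse (Qop T S r) := by
    rw [← Ring.inverse_star, hQsa.star_eq]
  have hPsa : star P = P := by
    rw [hPdef, star_add, star_smul, star_mul, star_mul, hTsa.star_eq,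
      hSsa.star_eq, hDsisa.star_eq, hDcosa.star_eq, star_trivial r, ← hTDsi.eq, ← hSDco.eq]
  -- compactness
  have hAc : IsCompactOperator (Ar T S r) := by
    have h1 : IsCompactOperator ⇑(T ∘L Dsi T r) := by
      rw [ContinuousLinearMap.coe_comp']
      exact hTc.comp_clm (Dsi T r)
    have h2 : IsCompactOperator ⇑(S ∘L Dco T r) := by
      rw [ContinuousLinearMap.coe_comp']
      exact hSc.comp_clm (Dco T r)
    have h3 : IsCompactOperator ⇑(r • (T ∘L Dsi T r) + S ∘L Dco T r) := by
      rw [ContinuousLinearMap.coe_add', ContinuousLinearMap.coe_smul']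
      exact (h1.smul r).add h2
    show IsCompactOperator ⇑((r • (T ∘L Dsi T r) + S ∘L Dco T r) ∘L Ring.inverse (Qop T S r))
    rw [ContinuousLinearMap.coe_comp']
    exact h3.comp_clm _
  refine ⟨hQu, hAc, ?_, ?_, ?_⟩
  · show star _ = _
    rw [hArP, star_mul, hiQsa, hPsa]
    exact hPiQ.symm.eq
  · rw [hArP]
    exact hTP.symm.mul_left hTiQ.symm
  · rw [hArP]
    exact hSP.symm.mul_left hSiQ.symm
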